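/- Let f(α,c) = (1 + (1+α)(1-c))·(1 + (1+α)(1 - c(1 + (1+α)(1-c))²)). For all α with -1/100 < α < 1/8 and all c with 1 < c < 13/10, the partial derivative ∂f/∂α(α,c) is strictly positive; in particular f(α,c) is strictly increasing in α on this range. -/

import Mathlib

/-- The two-step contraction factor. -/
noncomputable def f (α c : ℝ) : ℝ :=
  (1 + (1 + α) * (1 - c)) * (1 + (1 + α) * (1 - c * (1 + (1 + α) * (1 - c)) ^ 2))

lemma hasDerivAt_f (α c : ℝ) :
    HasDerivAt (fun a => f a c)
      ((c - 1) * (-4 - 2*α + c*(1+α)*(15/16 + (2*c*(1+α) - 17/4 - 2*α)^2))) α := by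
  have hu : HasDerivAt (fun a : ℝ => 1 + (1 + a) * (1 - c)) (1 - c) α := by
    simpa using (((hasDerivAt_id α).const_add 1).mul_const (1 - c)).const_add 1
  have hw : HasDerivAt (fun a : ℝ => 1 - c * (1 + (1 + a) * (1 - c)) ^ 2)
      (-(c * (2 * (1 + (1 + α) * (1 - c)) ^ 1 * (1 - c)))) α := by
    simpa using ((hu.pow 2).const_mul c).const_sub 1
  have ha : HasDerivAt (fun a : ℝ => 1 + a) 1 α := (hasDerivAt_id α).const_add 1
  have hv : HasDerivAt
      (fun a : ℝ => 1 + (1 + a) * (1 - c * (1 + (1 + a) * (1 - c)) ^ 2))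
      (1 * (1 - c * (1 + (1 + α) * (1 - c)) ^ 2) +
        (1 + α) * -(c * (2 * (1 + (1 + α) * (1 - c)) ^ 1 * (1 - c)))) α :=
    (ha.mul hw).const_add 1
  have := hu.mul hv
  unfold f
  refine this.congr_deriv ?_
  ring

lemma deriv_pos (α c : ℝ) (hα1 : -1/100 < α) (hα2 : α < 1/8)
    (hc1 : 1 < c) (hc2 : c < 13/10) :
    0 < deriv (fun a => f a c) α := by
  rw [(hasDerivAt_f α c).deriv]
  have h1 : (0:ℝ) < c - 1 := by linarith
  have key : 0 < -4 - 2*α + c*(1+α)*(15/16 + (2*c*(1+α) - 17/4 - 2*α)^2) := by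
    nlinarith [sq_nonneg (2*c*(1+α) - 17/4 - 2*α), sq_nonneg (c-1), sq_nonneg (c*(1+α) - 1),
      mul_pos h1 (show (0:ℝ) < 1 + α by linarith),
      mul_pos (mul_pos h1 h1) (show (0:ℝ) < 1 + α by linarith),
      sq_nonneg (c*(1+α) - 2), mul_pos (show (0:ℝ) < c by linarith) (show (0:ℝ) < 1 + α by linarith)]
  positivity

/-- For `α ∈ (-1/100, 1/8)` and `c ∈ (1, 13/10)`, `∂f/∂α > 0`; in particular
`f(·, c)` is strictly increasing in `α` on this range. -/
theorem deriv_f_alpha_pos (α c : ℝ) (hα1 : -1/100 < α) (hα2 : α < 1/8)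
    (hc1 : 1 < c) (hc2 : c < 13/10) :
    0 < deriv (fun a => f a c) α ∧
      StrictMonoOn (fun a => f a c) (Set.Ioo (-1/100 : ℝ) (1/8)) := by
  refine ⟨deriv_pos α c hα1 hα2 hc1 hc2, ?_⟩
  apply strictMonoOn_of_deriv_pos (convex_Ioo _ _)
  · exact Continuous.continuousOn (by
      have : Continuous (fun a => f a c) := by unfold f; continuity
      exact this)
  · intro x hx
    rw [interior_Ioo] at hx
    exact deriv_pos x c hx.1 hx.2 hc1 hc2
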